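/- For all Banach spaces X₁,…,Xₙ, Y, the function T ↦ Γ(T) is a norm on the vector space Γ(X₁,…,Xₙ;Y) of bounded multilinear operators from X₁ × ⋯ × Xₙ to Y that factor through a Hilbert space (in particular, this set is a linear subspace of the bounded multilinear operators). -/

import Mathlib

open scoped NNReal

noncomputable section

universe u

variable (𝕜 : Type u) [RCLike 𝕜]

/-- A factorization of the bounded multilinear operator `T` through a Hilbert space:
a Hilbert space `H`, a bounded multilinear operator `A` into `H`, and a Lipschitz map `B`
defined on the image of `A`, such that `T = B ∘ A`. -/
structure HilbertFactorization {n : ℕ} {X : Fin n → Type u} {Y : Type u}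
    [∀ i, NormedAddCommGroup (X i)] [∀ i, NormedSpace 𝕜 (X i)]
    [NormedAddCommGroup Y] [NormedSpace 𝕜 Y]
    (T : ContinuousMultilinearMap 𝕜 X Y) where
  H : Type u
  [instNormed : NormedAddCommGroup H]
  [instInner : InnerProductSpace 𝕜 H]
  [instComplete : CompleteSpace H]
  A : ContinuousMultilinearMap 𝕜 X H
  B : H → Y
  K : ℝ≥0
  lipschitz : LipschitzOnWith K B (Set.range fun x => A x)
  factors : ∀ x, T x = B (A x)

attribute [instance] HilbertFactorization.instNormed HilbertFactorization.instInner
  HilbertFactorization.instComplete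

variable {𝕜}

/-- `T` factors through a Hilbert space. -/
def FactorsThroughHilbert {n : ℕ} {X : Fin n → Type u} {Y : Type u}
    [∀ i, NormedAddCommGroup (X i)] [∀ i, NormedSpace 𝕜 (X i)]
    [NormedAddCommGroup Y] [NormedSpace 𝕜 Y]
    (T : ContinuousMultilinearMap 𝕜 X Y) : Prop :=
  Nonempty (HilbertFactorization 𝕜 T)

/-- The constant `Γ(T)`: the infimum of `‖A‖ · Lip(B)` over all factorizations of `T`
through a Hilbert space. -/
def gammaNorm {n : ℕ} {X : Fin n → Type u} {Y : Type u}
    [∀ i, NormedAddCommGroup (X i)] [∀ i, NormedSpace 𝕜 (X i)]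
    [NormedAddCommGroup Y] [NormedSpace 𝕜 Y]
    (T : ContinuousMultilinearMap 𝕜 X Y) : ℝ :=
  sInf {c : ℝ | ∃ F : HilbertFactorization 𝕜 T, c = ‖F.A‖ * (F.K : ℝ)}

section Aux

variable {n : ℕ} {X : Fin n → Type u} {Y : Type u}
    [∀ i, NormedAddCommGroup (X i)] [∀ i, NormedSpace 𝕜 (X i)]
    [NormedAddCommGroup Y] [NormedSpace 𝕜 Y]

/-- The defining set for `gammaNorm`. -/
def gammaSet (T : ContinuousMultilinearMap 𝕜 X Y) : Set ℝ :=
  {c : ℝ | ∃ F : HilbertFactorization 𝕜 T, c = ‖F.A‖ * (F.K : ℝ)}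

lemma gammaNorm_eq (T : ContinuousMultilinearMap 𝕜 X Y) : gammaNorm T = sInf (gammaSet T) := rfl

lemma gammaSet_nonneg (T : ContinuousMultilinearMap 𝕜 X Y) :
    ∀ c ∈ gammaSet T, (0:ℝ) ≤ c := by
  rintro c ⟨F, rfl⟩
  positivity

lemma gammaSet_bddBelow (T : ContinuousMultilinearMap 𝕜 X Y) : BddBelow (gammaSet T) :=
  ⟨0, fun c hc => gammaSet_nonneg T c hc⟩

lemma gammaNorm_nonneg (T : ContinuousMultilinearMap 𝕜 X Y) : 0 ≤ gammaNorm T :=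
  Real.sInf_nonneg (gammaSet_nonneg T)

lemma gammaNorm_le (T : ContinuousMultilinearMap 𝕜 X Y) (F : HilbertFactorization 𝕜 T) :
    gammaNorm T ≤ ‖F.A‖ * (F.K : ℝ) :=
  csInf_le (gammaSet_bddBelow T) ⟨F, rfl⟩

/-- The zero operator factors through `𝕜`. -/
def zeroFact : HilbertFactorization 𝕜 (0 : ContinuousMultilinearMap 𝕜 X Y) where
  H := 𝕜
  A := 0
  B := fun _ => 0
  K := 0
  lipschitz := by intro p _ q _; simp
  factors := fun _ => rfl

lemma gammaNorm_zero : gammaNorm (0 : ContinuousMultilinearMap 𝕜 X Y) = 0 := by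
  refine le_antisymm ?_ (gammaNorm_nonneg _)
  have h : gammaNorm (0 : ContinuousMultilinearMap 𝕜 X Y) ≤
      ‖(0 : ContinuousMultilinearMap 𝕜 X 𝕜)‖ * ((0 : ℝ≥0) : ℝ) :=
    gammaNorm_le _ (zeroFact (𝕜 := 𝕜) (X := X) (Y := Y))
  simpa using h

/-- Fundamental pointwise bound from a factorization. -/
lemma norm_apply_le_of_fact (hn : 0 < n) {T : ContinuousMultilinearMap 𝕜 X Y}
    (F : HilbertFactorization 𝕜 T) (x : ∀ i, X i) :
    ‖T x‖ ≤ ‖F.A‖ * (F.K : ℝ) * ∏ i, ‖x i‖ := by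
  have hA0 : F.A (fun _ => 0) = 0 := F.A.map_coord_zero ⟨0, hn⟩ rfl
  have hT0 : T (fun _ => 0) = 0 := T.map_coord_zero ⟨0, hn⟩ rfl
  have h1 : dist (F.B (F.A x)) (F.B (F.A fun _ => 0)) ≤
      (F.K : ℝ) * dist (F.A x) (F.A fun _ => 0) :=
    lipschitzOnWith_iff_dist_le_mul.mp F.lipschitz _ ⟨x, rfl⟩ _ ⟨_, rfl⟩
  have h2 : ‖T x‖ ≤ (F.K : ℝ) * ‖F.A x‖ := by
    calc ‖T x‖ = dist (T x) (T fun _ => 0) := by rw [hT0, dist_zero_right]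
    _ = dist (F.B (F.A x)) (F.B (F.A fun _ => 0)) := by rw [F.factors, F.factors]
    _ ≤ (F.K : ℝ) * dist (F.A x) (F.A fun _ => 0) := h1
    _ = (F.K : ℝ) * ‖F.A x‖ := by rw [hA0, dist_zero_right]
  calc ‖T x‖ ≤ (F.K : ℝ) * ‖F.A x‖ := h2
  _ ≤ (F.K : ℝ) * (‖F.A‖ * ∏ i, ‖x i‖) :=
      mul_le_mul_of_nonneg_left (F.A.le_opNorm x) F.K.coe_nonneg
  _ = ‖F.A‖ * (F.K : ℝ) * ∏ i, ‖x i‖ := by ring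

lemma eq_zero_of_fact_mul_eq_zero (hn : 0 < n) {T : ContinuousMultilinearMap 𝕜 X Y}
    (F : HilbertFactorization 𝕜 T) (h : ‖F.A‖ * (F.K : ℝ) = 0) : T = 0 := by
  ext x
  have := norm_apply_le_of_fact hn F x
  rw [h, zero_mul] at this
  have : ‖T x‖ ≤ 0 := this
  simpa using le_antisymm this (norm_nonneg _)

/-- Rescaling a factorization by `t > 0`. -/
def scaleFact {T : ContinuousMultilinearMap 𝕜 X Y} (F : HilbertFactorization 𝕜 T)
    (t : ℝ) (ht : 0 < t) : HilbertFactorization 𝕜 T where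
  H := F.H
  A := (RCLike.ofReal t : 𝕜) • F.A
  B := fun h => F.B ((RCLike.ofReal t : 𝕜)⁻¹ • h)
  K := F.K * (Real.toNNReal t)⁻¹
  lipschitz := by
    have ht0 : (RCLike.ofReal t : 𝕜) ≠ 0 := by
      simpa using ht.ne'
    rw [lipschitzOnWith_iff_dist_le_mul]
    rintro _ ⟨x, rfl⟩ _ ⟨y, rfl⟩
    simp only [ContinuousMultilinearMap.smul_apply, inv_smul_smul₀ ht0]
    have h1 : dist (F.B (F.A x)) (F.B (F.A y)) ≤ (F.K : ℝ) * dist (F.A x) (F.A y) :=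
      lipschitzOnWith_iff_dist_le_mul.mp F.lipschitz _ ⟨x, rfl⟩ _ ⟨y, rfl⟩
    have h2 : dist ((RCLike.ofReal t : 𝕜) • F.A x) ((RCLike.ofReal t : 𝕜) • F.A y)
        = t * dist (F.A x) (F.A y) := by
      rw [dist_smul₀, RCLike.norm_ofReal, abs_of_pos ht]
    rw [h2]
    have hco : ((F.K * (Real.toNNReal t)⁻¹ : ℝ≥0) : ℝ) = (F.K : ℝ) / t := by
      rw [NNReal.coe_mul, NNReal.coe_inv, Real.coe_toNNReal t ht.le, div_eq_mul_inv]
    rw [hco]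
    calc dist (F.B (F.A x)) (F.B (F.A y)) ≤ (F.K : ℝ) * dist (F.A x) (F.A y) := h1
    _ = (F.K : ℝ) / t * (t * dist (F.A x) (F.A y)) := by
        field_simp
  factors := fun x => by
    have ht0 : (RCLike.ofReal t : 𝕜) ≠ 0 := by simpa using ht.ne'
    simp only [ContinuousMultilinearMap.smul_apply, inv_smul_smul₀ ht0]
    exact F.factors x

lemma scaleFact_norm_A {T : ContinuousMultilinearMap 𝕜 X Y} (F : HilbertFactorization 𝕜 T)
    (t : ℝ) (ht : 0 < t) : ‖(scaleFact F t ht).A‖ = t * ‖F.A‖ := by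
  have : ‖(RCLike.ofReal t : 𝕜) • F.A‖ = ‖(RCLike.ofReal t : 𝕜)‖ * ‖F.A‖ :=
    norm_smul (RCLike.ofReal t : 𝕜) F.A
  change ‖(RCLike.ofReal t : 𝕜) • F.A‖ = _
  rw [this,
    RCLike.norm_ofReal, abs_of_pos ht]

lemma scaleFact_K {T : ContinuousMultilinearMap 𝕜 X Y} (F : HilbertFactorization 𝕜 T)
    (t : ℝ) (ht : 0 < t) : (((scaleFact F t ht).K : ℝ≥0) : ℝ) = (F.K : ℝ) / t := by
  rw [show (scaleFact F t ht).K = F.K * (Real.toNNReal t)⁻¹ from rfl,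
    NNReal.coe_mul, NNReal.coe_inv, Real.coe_toNNReal t ht.le, div_eq_mul_inv]

/-- A balanced factorization: `‖A‖² ` and `K²` both at most the original product. -/
lemma exists_balanced (hn : 0 < n) {T : ContinuousMultilinearMap 𝕜 X Y} (hT : T ≠ 0)
    (F : HilbertFactorization 𝕜 T) :
    ∃ F' : HilbertFactorization 𝕜 T,
      ‖F'.A‖ ^ 2 ≤ ‖F.A‖ * (F.K : ℝ) ∧ ((F'.K : ℝ)) ^ 2 ≤ ‖F.A‖ * (F.K : ℝ) := by
  have hak : 0 < ‖F.A‖ * (F.K : ℝ) := by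
    rcases lt_or_eq_of_le (mul_nonneg (norm_nonneg F.A) F.K.coe_nonneg) with h | h
    · exact h
    · exact absurd (eq_zero_of_fact_mul_eq_zero hn F h.symm) hT
  have ha : 0 < ‖F.A‖ := by
    rcases (norm_nonneg F.A).lt_or_eq with h | h
    · exact h
    · rw [← h] at hak; simp at hak
  have hk : 0 < (F.K : ℝ) := by
    by_contra h
    push_neg at h
    have : (F.K : ℝ) = 0 := le_antisymm h F.K.coe_nonneg
    rw [this, mul_zero] at hak
    exact lt_irrefl _ hak
  set t : ℝ := Real.sqrt ((F.K : ℝ) / ‖F.A‖) with htdef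
  have ht : 0 < t := Real.sqrt_pos.mpr (div_pos hk ha)
  have ht2 : t ^ 2 = (F.K : ℝ) / ‖F.A‖ := Real.sq_sqrt (div_pos hk ha).le
  refine ⟨scaleFact F t ht, ?_, ?_⟩
  · rw [scaleFact_norm_A]
    have heq : (t * ‖F.A‖) ^ 2 = ‖F.A‖ * (F.K : ℝ) := by
      rw [mul_pow, ht2]
      field_simp
    exact le_of_eq heq
  · rw [scaleFact_K]
    have heq : ((F.K : ℝ) / t) ^ 2 = ‖F.A‖ * (F.K : ℝ) := by
      rw [div_pow, ht2]
      rw [div_div_eq_mul_div, div_eq_iff hk.ne']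
      ring
    exact le_of_eq heq

/-- Factorization of a sum via the `ℓ²` direct sum. -/
def addFact {T S : ContinuousMultilinearMap 𝕜 X Y} (F : HilbertFactorization 𝕜 T)
    (G : HilbertFactorization 𝕜 S) : HilbertFactorization 𝕜 (T + S) where
  H := WithLp 2 (F.H × G.H)
  A := ((WithLp.prodContinuousLinearEquiv 2 𝕜 F.H G.H).symm :
      (F.H × G.H) →L[𝕜] WithLp 2 (F.H × G.H)).compContinuousMultilinearMap (F.A.prod G.A)
  B := fun h => F.B h.fst + G.B h.snd
  K := NNReal.sqrt (F.K ^ 2 + G.K ^ 2)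
  lipschitz := by
    rw [lipschitzOnWith_iff_dist_le_mul]
    rintro _ ⟨x, rfl⟩ _ ⟨y, rfl⟩
    have h1 : dist (F.B (F.A x)) (F.B (F.A y)) ≤ (F.K : ℝ) * dist (F.A x) (F.A y) :=
      lipschitzOnWith_iff_dist_le_mul.mp F.lipschitz _ ⟨x, rfl⟩ _ ⟨y, rfl⟩
    have h2 : dist (G.B (G.A x)) (G.B (G.A y)) ≤ (G.K : ℝ) * dist (G.A x) (G.A y) :=
      lipschitzOnWith_iff_dist_le_mul.mp G.lipschitz _ ⟨x, rfl⟩ _ ⟨y, rfl⟩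
    set p := ((WithLp.prodContinuousLinearEquiv 2 𝕜 F.H G.H).symm :
      (F.H × G.H) →L[𝕜] WithLp 2 (F.H × G.H)).compContinuousMultilinearMap (F.A.prod G.A) x
    set q := ((WithLp.prodContinuousLinearEquiv 2 𝕜 F.H G.H).symm :
      (F.H × G.H) →L[𝕜] WithLp 2 (F.H × G.H)).compContinuousMultilinearMap (F.A.prod G.A) y
    have hpf : p.fst = F.A x := rfl
    have hps : p.snd = G.A x := rfl
    have hqf : q.fst = F.A y := rfl
    have hqs : q.snd = G.A y := rfl
    have hdist : dist p q = Real.sqrt (dist (F.A x) (F.A y) ^ 2 + dist (G.A x) (G.A y) ^ 2) := by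
      rw [WithLp.prod_dist_eq_of_L2, hpf, hps, hqf, hqs]
    have hK : ((NNReal.sqrt (F.K ^ 2 + G.K ^ 2) : ℝ≥0) : ℝ)
        = Real.sqrt ((F.K : ℝ) ^ 2 + (G.K : ℝ) ^ 2) := by
      rw [Real.coe_sqrt]; push_cast; ring_nf
    calc dist (F.B p.fst + G.B p.snd) (F.B q.fst + G.B q.snd)
        ≤ dist (F.B p.fst) (F.B q.fst) + dist (G.B p.snd) (G.B q.snd) := dist_add_add_le _ _ _ _
    _ ≤ (F.K : ℝ) * dist (F.A x) (F.A y) + (G.K : ℝ) * dist (G.A x) (G.A y) := by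
        rw [hpf, hps, hqf, hqs]; exact add_le_add h1 h2
    _ ≤ Real.sqrt ((F.K : ℝ) ^ 2 + (G.K : ℝ) ^ 2)
        * Real.sqrt (dist (F.A x) (F.A y) ^ 2 + dist (G.A x) (G.A y) ^ 2) := by
        set k1 := (F.K : ℝ); set k2 := (G.K : ℝ)
        set d1 := dist (F.A x) (F.A y); set d2 := dist (G.A x) (G.A y)
        have hk1 : 0 ≤ k1 := F.K.coe_nonneg
        have hk2 : 0 ≤ k2 := G.K.coe_nonneg
        have hd1 : 0 ≤ d1 := dist_nonneg
        have hd2 : 0 ≤ d2 := dist_nonneg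
        have hs1 : Real.sqrt (k1 ^ 2 + k2 ^ 2) ^ 2 = k1 ^ 2 + k2 ^ 2 :=
          Real.sq_sqrt (by positivity)
        have hs2 : Real.sqrt (d1 ^ 2 + d2 ^ 2) ^ 2 = d1 ^ 2 + d2 ^ 2 :=
          Real.sq_sqrt (by positivity)
        have hn1 : 0 ≤ Real.sqrt (k1 ^ 2 + k2 ^ 2) := Real.sqrt_nonneg _
        have hn2 : 0 ≤ Real.sqrt (d1 ^ 2 + d2 ^ 2) := Real.sqrt_nonneg _
        nlinarith [sq_nonneg (k1 * d2 - k2 * d1), sq_nonneg (k1 * d1 + k2 * d2),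
          mul_nonneg hn1 hn2, sq_nonneg (Real.sqrt (k1^2+k2^2) * Real.sqrt (d1^2+d2^2)
            - (k1*d1 + k2*d2)), mul_nonneg (mul_nonneg hk1 hd1) (mul_nonneg hk2 hd2)]
    _ = ((NNReal.sqrt (F.K ^ 2 + G.K ^ 2) : ℝ≥0) : ℝ) * dist p q := by rw [hdist, hK]
  factors := fun x => by
    have : (T + S) x = T x + S x := rfl
    rw [this, F.factors, G.factors]
    rfl

lemma addFact_norm_A {T S : ContinuousMultilinearMap 𝕜 X Y} (F : HilbertFactorization 𝕜 T)
    (G : HilbertFactorization 𝕜 S) :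
    ‖(addFact F G).A‖ ≤ Real.sqrt (‖F.A‖ ^ 2 + ‖G.A‖ ^ 2) := by
  apply ContinuousMultilinearMap.opNorm_le_bound (Real.sqrt_nonneg _)
  intro x
  have hx : ‖(addFact F G).A x‖ = Real.sqrt (‖F.A x‖ ^ 2 + ‖G.A x‖ ^ 2) := by
    exact WithLp.prod_norm_eq_of_L2 _
  rw [hx]
  have hP : (0:ℝ) ≤ ∏ i, ‖x i‖ := Finset.prod_nonneg fun i _ => norm_nonneg _
  have h1 : ‖F.A x‖ ≤ ‖F.A‖ * ∏ i, ‖x i‖ := F.A.le_opNorm x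
  have h2 : ‖G.A x‖ ≤ ‖G.A‖ * ∏ i, ‖x i‖ := G.A.le_opNorm x
  have key : ‖F.A x‖ ^ 2 + ‖G.A x‖ ^ 2 ≤ (‖F.A‖ ^ 2 + ‖G.A‖ ^ 2) * (∏ i, ‖x i‖) ^ 2 := by
    have e1 : ‖F.A x‖ ^ 2 ≤ (‖F.A‖ * ∏ i, ‖x i‖) ^ 2 := by
      apply sq_le_sq' _ h1; linarith [norm_nonneg (F.A x)]
    have e2 : ‖G.A x‖ ^ 2 ≤ (‖G.A‖ * ∏ i, ‖x i‖) ^ 2 := by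
      apply sq_le_sq' _ h2; linarith [norm_nonneg (G.A x)]
    nlinarith
  calc Real.sqrt (‖F.A x‖ ^ 2 + ‖G.A x‖ ^ 2)
      ≤ Real.sqrt ((‖F.A‖ ^ 2 + ‖G.A‖ ^ 2) * (∏ i, ‖x i‖) ^ 2) := Real.sqrt_le_sqrt key
  _ = Real.sqrt (‖F.A‖ ^ 2 + ‖G.A‖ ^ 2) * ∏ i, ‖x i‖ := by
      rw [Real.sqrt_mul (by positivity), Real.sqrt_sq hP]

lemma addFact_K {T S : ContinuousMultilinearMap 𝕜 X Y} (F : HilbertFactorization 𝕜 T)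
    (G : HilbertFactorization 𝕜 S) :
    (((addFact F G).K : ℝ≥0) : ℝ) = Real.sqrt ((F.K : ℝ) ^ 2 + (G.K : ℝ) ^ 2) := by
  show ((NNReal.sqrt (F.K ^ 2 + G.K ^ 2) : ℝ≥0) : ℝ) = _
  rw [Real.coe_sqrt]; push_cast; ring_nf

/-- Factorization of `c • T`. -/
def smulFact (c : 𝕜) {T : ContinuousMultilinearMap 𝕜 X Y} (F : HilbertFactorization 𝕜 T) :
    HilbertFactorization 𝕜 (c • T) where
  H := F.H
  A := F.A
  B := fun h => c • F.B h
  K := ‖c‖₊ * F.K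
  lipschitz := by
    rw [lipschitzOnWith_iff_dist_le_mul]
    intro p hp q hq
    have h1 : dist (F.B p) (F.B q) ≤ (F.K : ℝ) * dist p q :=
      lipschitzOnWith_iff_dist_le_mul.mp F.lipschitz p hp q hq
    rw [dist_smul₀]
    push_cast
    rw [mul_assoc]
    exact mul_le_mul_of_nonneg_left h1 (norm_nonneg c)
  factors := fun x => by simp [F.factors]

lemma gammaNorm_smul_le (c : 𝕜) {T : ContinuousMultilinearMap 𝕜 X Y}
    (hT : FactorsThroughHilbert T) : gammaNorm (c • T) ≤ ‖c‖ * gammaNorm T := by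
  rcases eq_or_ne c 0 with rfl | hc
  · rw [zero_smul, gammaNorm_zero, norm_zero, zero_mul]
  have hc' : (0:ℝ) < ‖c‖ := norm_pos_iff.mpr hc
  rw [← div_le_iff₀' hc']
  apply le_csInf
  · obtain ⟨F⟩ := hT
    exact ⟨_, F, rfl⟩
  rintro b ⟨F, rfl⟩
  rw [div_le_iff₀' hc']
  have hmem : gammaNorm (c • T) ≤ ‖(smulFact c F).A‖ * (((smulFact c F).K : ℝ≥0) : ℝ) :=
    gammaNorm_le _ (smulFact c F)
  have : ‖(smulFact c F).A‖ * (((smulFact c F).K : ℝ≥0) : ℝ) = ‖c‖ * (‖F.A‖ * (F.K : ℝ)) := by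
    show ‖F.A‖ * ((‖c‖₊ * F.K : ℝ≥0) : ℝ) = _
    push_cast
    ring
  rw [this] at hmem
  exact hmem

lemma gammaNorm_smul (c : 𝕜) {T : ContinuousMultilinearMap 𝕜 X Y}
    (hT : FactorsThroughHilbert T) : gammaNorm (c • T) = ‖c‖ * gammaNorm T := by
  rcases eq_or_ne c 0 with rfl | hc
  · rw [zero_smul, gammaNorm_zero, norm_zero, zero_mul]
  refine le_antisymm (gammaNorm_smul_le c hT) ?_
  have hcT : FactorsThroughHilbert (c • T) := by
    obtain ⟨F⟩ := hT; exact ⟨smulFact c F⟩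
  have h2 := gammaNorm_smul_le c⁻¹ hcT
  rw [inv_smul_smul₀ hc] at h2
  have hc' : (0:ℝ) < ‖c‖ := norm_pos_iff.mpr hc
  rw [norm_inv] at h2
  calc ‖c‖ * gammaNorm T ≤ ‖c‖ * (‖c‖⁻¹ * gammaNorm (c • T)) :=
      mul_le_mul_of_nonneg_left h2 hc'.le
  _ = gammaNorm (c • T) := by field_simp

lemma gammaNorm_add_le (hn : 0 < n) (T S : ContinuousMultilinearMap 𝕜 X Y)
    (hT : FactorsThroughHilbert T) (hS : FactorsThroughHilbert S) :
    gammaNorm (T + S) ≤ gammaNorm T + gammaNorm S := by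
  rcases eq_or_ne T 0 with rfl | hT0
  · rw [zero_add, gammaNorm_zero, zero_add]
  rcases eq_or_ne S 0 with rfl | hS0
  · rw [add_zero, gammaNorm_zero, add_zero]
  apply le_of_forall_pos_le_add
  intro ε hε
  obtain ⟨F₀⟩ := hT
  obtain ⟨G₀⟩ := hS
  -- get near-optimal factorizations
  have hT' : gammaNorm T < gammaNorm T + ε / 2 := by linarith
  have hS' : gammaNorm S < gammaNorm S + ε / 2 := by linarith
  obtain ⟨a, ⟨F₁, rfl⟩, haF⟩ :=
    exists_lt_of_csInf_lt (s := gammaSet T) ⟨_, ⟨F₀, rfl⟩⟩ hT'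
  obtain ⟨b, ⟨G₁, rfl⟩, hbG⟩ :=
    exists_lt_of_csInf_lt (s := gammaSet S) ⟨_, ⟨G₀, rfl⟩⟩ hS'
  obtain ⟨F, hFA, hFK⟩ := exists_balanced hn hT0 F₁
  obtain ⟨G, hGA, hGK⟩ := exists_balanced hn hS0 G₁
  have hFA' : ‖F.A‖ ^ 2 ≤ gammaNorm T + ε / 2 := hFA.trans haF.le
  have hFK' : ((F.K : ℝ)) ^ 2 ≤ gammaNorm T + ε / 2 := hFK.trans haF.le
  have hGA' : ‖G.A‖ ^ 2 ≤ gammaNorm S + ε / 2 := hGA.trans hbG.le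
  have hGK' : ((G.K : ℝ)) ^ 2 ≤ gammaNorm S + ε / 2 := hGK.trans hbG.le
  have hsum : gammaNorm (T + S) ≤ ‖(addFact F G).A‖ * (((addFact F G).K : ℝ≥0) : ℝ) :=
    gammaNorm_le _ (addFact F G)
  have hbound : ‖(addFact F G).A‖ * (((addFact F G).K : ℝ≥0) : ℝ)
      ≤ gammaNorm T + gammaNorm S + ε := by
    have hA := addFact_norm_A F G
    have hK := addFact_K F G
    have hnn : (0:ℝ) ≤ gammaNorm T + gammaNorm S + ε := by
      have := gammaNorm_nonneg T; have := gammaNorm_nonneg S; linarith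
    have h1 : Real.sqrt (‖F.A‖ ^ 2 + ‖G.A‖ ^ 2)
        ≤ Real.sqrt (gammaNorm T + gammaNorm S + ε) := by
      apply Real.sqrt_le_sqrt; linarith
    have h2 : Real.sqrt ((F.K : ℝ) ^ 2 + (G.K : ℝ) ^ 2)
        ≤ Real.sqrt (gammaNorm T + gammaNorm S + ε) := by
      apply Real.sqrt_le_sqrt; linarith
    have hKnn : (0:ℝ) ≤ (((addFact F G).K : ℝ≥0) : ℝ) := NNReal.coe_nonneg _
    have hAnn : (0:ℝ) ≤ ‖(addFact F G).A‖ := norm_nonneg _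
    calc ‖(addFact F G).A‖ * (((addFact F G).K : ℝ≥0) : ℝ)
        ≤ Real.sqrt (gammaNorm T + gammaNorm S + ε)
          * Real.sqrt (gammaNorm T + gammaNorm S + ε) := by
          apply mul_le_mul (hA.trans h1) (by rw [hK]; exact h2) hKnn (Real.sqrt_nonneg _)
    _ = gammaNorm T + gammaNorm S + ε := Real.mul_self_sqrt hnn
  exact hsum.trans hbound

lemma gammaNorm_eq_zero_iff (hn : 0 < n) {T : ContinuousMultilinearMap 𝕜 X Y}
    (hT : FactorsThroughHilbert T) : gammaNorm T = 0 ↔ T = 0 := by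
  constructor
  · intro h0
    ext x
    have hx : ‖T x‖ ≤ 0 := by
      apply le_of_forall_pos_le_add
      intro ε hε
      rw [zero_add]
      set P := ∏ i, ‖x i‖ with hP
      have hPnn : (0:ℝ) ≤ P := Finset.prod_nonneg fun i _ => norm_nonneg _
      have hεP : 0 < ε / (P + 1) := by positivity
      obtain ⟨F⟩ := hT
      have hlt : gammaNorm T < ε / (P + 1) := by rw [h0]; exact hεP
      obtain ⟨c, ⟨F', rfl⟩, hc⟩ :=
        exists_lt_of_csInf_lt (s := gammaSet T) ⟨_, ⟨F, rfl⟩⟩ hlt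
      have := norm_apply_le_of_fact hn F' x
      calc ‖T x‖ ≤ ‖F'.A‖ * (F'.K : ℝ) * P := this
      _ ≤ ε / (P + 1) * P := by
          apply mul_le_mul_of_nonneg_right hc.le hPnn
      _ ≤ ε / (P + 1) * (P + 1) := by
          apply mul_le_mul_of_nonneg_left (by linarith) hεP.le
      _ = ε := by field_simp
    simpa using le_antisymm hx (norm_nonneg _)
  · rintro rfl
    exact gammaNorm_zero

end Aux

/-- For all Banach spaces `X₁,…,Xₙ, Y`, the set of bounded multilinear
operators `X₁ × ⋯ × Xₙ → Y` factoring through a Hilbert space is a linear subspace of the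
bounded multilinear operators and `Γ` is a norm on it: it contains `0`, is closed under
addition and scalar multiplication, `Γ` is subadditive, absolutely homogeneous, and
`Γ(T) = 0` iff `T = 0` (on operators that factor). -/


theorem gammaNorm_isNorm {n : ℕ} (hn : 0 < n) {X : Fin n → Type u} {Y : Type u}
    [∀ i, NormedAddCommGroup (X i)] [∀ i, NormedSpace 𝕜 (X i)] [∀ i, CompleteSpace (X i)]
    [NormedAddCommGroup Y] [NormedSpace 𝕜 Y] [CompleteSpace Y] :
    FactorsThroughHilbert (0 : ContinuousMultilinearMap 𝕜 X Y) ∧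
    (∀ T S : ContinuousMultilinearMap 𝕜 X Y, FactorsThroughHilbert T →
      FactorsThroughHilbert S →
        FactorsThroughHilbert (T + S) ∧ gammaNorm (T + S) ≤ gammaNorm T + gammaNorm S) ∧
    (∀ (c : 𝕜) (T : ContinuousMultilinearMap 𝕜 X Y), FactorsThroughHilbert T →
        FactorsThroughHilbert (c • T) ∧ gammaNorm (c • T) = ‖c‖ * gammaNorm T) ∧
    (∀ T : ContinuousMultilinearMap 𝕜 X Y, FactorsThroughHilbert T →
        (gammaNorm T = 0 ↔ T = 0)) := by
  refine ⟨⟨zeroFact⟩, ?_, ?_, ?_⟩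
  · intro T S hT hS
    refine ⟨?_, gammaNorm_add_le hn T S hT hS⟩
    obtain ⟨F⟩ := hT; obtain ⟨G⟩ := hS
    exact ⟨addFact F G⟩
  · intro c T hT
    refine ⟨?_, gammaNorm_smul c hT⟩
    obtain ⟨F⟩ := hT
    exact ⟨smulFact c F⟩
  · intro T hT
    exact gammaNorm_eq_zero_iff hn hT
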